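/- Let 𝔾 be a finite two-player game and let BR : Σ ⇉ Σ be its best-reply correspondence, i.e. τ ∈ BR(σ) if and only if τₙ is a 0-reply to σ for n = 1, 2. For μ > 0 set W(μ) = {(σ, τ) ∈ Σ × Σ : τₙ is a μ-reply to σ for n = 1, 2}. Then the family {W(μ)}_{μ > 0} is a basis of neighborhoods of the graph of BR in Σ × Σ: (i) for every μ > 0 there exists a set U, open in Σ × Σ, with Graph(BR) ⊆ U ⊆ W(μ); and (ii) for every set W, open in Σ × Σ, with Graph(BR) ⊆ W, there exists μ > 0 such that W(μ) ⊆ W. -/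

import Mathlib

open Finset

noncomputable section

/-- The Dirac (vertex) mixed strategy concentrated on the pure strategy `s`. -/
def dirac {S : Type*} [DecidableEq S] (s : S) : S → ℝ :=
  fun t => if t = s then 1 else 0

/-- Bilinear extension of a two-player payoff function to mixed strategies. -/
def mixedPayoff {S1 S2 : Type*} [Fintype S1] [Fintype S2]
    (G : S1 → S2 → ℝ) (x : S1 → ℝ) (y : S2 → ℝ) : ℝ :=
  ∑ s1 : S1, ∑ s2 : S2, x s1 * y s2 * G s1 s2

/-- Nash equilibrium of a finite two-player game. -/
def IsNash {S1 S2 : Type*} [Fintype S1] [Fintype S2] [DecidableEq S1] [DecidableEq S2]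
    (G1 G2 : S1 → S2 → ℝ) (x : S1 → ℝ) (y : S2 → ℝ) : Prop :=
  (∀ s1 : S1, mixedPayoff G1 (dirac s1) y ≤ mixedPayoff G1 x y) ∧
  (∀ s2 : S2, mixedPayoff G2 x (dirac s2) ≤ mixedPayoff G2 x y)

/-- `t` is a `μ`-reply for player 1 against the opponent strategy `y`. -/
def IsReply1 {S1 S2 : Type*} [Fintype S1] [Fintype S2] [DecidableEq S1]
    (G1 : S1 → S2 → ℝ) (μ : ℝ) (t : S1 → ℝ) (y : S2 → ℝ) : Prop :=
  ∀ s1 : S1, mixedPayoff G1 (dirac s1) y - μ ≤ mixedPayoff G1 t y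

/-- `t` is a `μ`-reply for player 2 against the opponent strategy `x`. -/
def IsReply2 {S1 S2 : Type*} [Fintype S1] [Fintype S2] [DecidableEq S2]
    (G2 : S1 → S2 → ℝ) (μ : ℝ) (t : S2 → ℝ) (x : S1 → ℝ) : Prop :=
  ∀ s2 : S2, mixedPayoff G2 x (dirac s2) - μ ≤ mixedPayoff G2 x t

/-- A duplicate extension of the finite two-player game `(G1, G2)`: a game `(H1, H2)`
whose pure strategies are duplicates of mixed strategies of the base game, containing
the original pure strategies as vertices. -/
structure DuplicateExtension {S1 S2 T1 T2 : Type*}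
    [Fintype S1] [Fintype S2] [Fintype T1] [Fintype T2]
    [DecidableEq S1] [DecidableEq S2]
    (G1 G2 : S1 → S2 → ℝ) (H1 H2 : T1 → T2 → ℝ) where
  e1 : S1 ↪ T1
  e2 : S2 ↪ T2
  iota1 : T1 → S1 → ℝ
  iota2 : T2 → S2 → ℝ
  iota1_mem : ∀ t1, iota1 t1 ∈ stdSimplex ℝ S1
  iota2_mem : ∀ t2, iota2 t2 ∈ stdSimplex ℝ S2
  iota1_vertex : ∀ s1, iota1 (e1 s1) = dirac s1
  iota2_vertex : ∀ s2, iota2 (e2 s2) = dirac s2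
  payoff1_eq : ∀ t1 t2, H1 t1 t2 = mixedPayoff G1 (iota1 t1) (iota2 t2)
  payoff2_eq : ∀ t1 t2, H2 t1 t2 = mixedPayoff G2 (iota1 t1) (iota2 t2)

/-- The base-game mixed strategy equivalent to a mixed strategy of a duplicate extension. -/
def reduceStrat {S T : Type*} [Fintype T] (iota : T → S → ℝ) (z : T → ℝ) : S → ℝ :=
  fun s => ∑ t : T, z t * iota t s

/-- The set of mixed strategy profiles of a two-player game. -/
def simplexProd (S1 S2 : Type*) [Fintype S1] [Fintype S2] :
    Set ((S1 → ℝ) × (S2 → ℝ)) :=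
  (stdSimplex ℝ S1) ×ˢ (stdSimplex ℝ S2)

/-- The sets `W(μ)` of profile pairs `(σ, τ)` with `τₙ` a `μ`-reply to
`σ` form a basis of neighborhoods of the graph of the best-reply correspondence in
`Σ × Σ` (relative topology on `Σ × Σ` inside the ambient Euclidean space): (i) every
`W(μ)` contains a relatively open set containing the graph, and (ii) every relatively
open set containing the graph contains some `W(μ)`. -/
private lemma cont_mixedPayoff {S1 S2 : Type*} [Fintype S1] [Fintype S2]
    (G : S1 → S2 → ℝ) :
    Continuous (fun q : (S1 → ℝ) × (S2 → ℝ) => mixedPayoff G q.1 q.2) := by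
  unfold mixedPayoff
  exact continuous_finset_sum _ fun s1 _ => continuous_finset_sum _ fun s2 _ =>
    (((continuous_apply s1).comp continuous_fst).mul
      ((continuous_apply s2).comp continuous_snd)).mul continuous_const
theorem mu_reply_sets_basis_of_best_reply_graph
    {S1 S2 : Type*} [Fintype S1] [Fintype S2] [DecidableEq S1] [DecidableEq S2]
    [Nonempty S1] [Nonempty S2]
    (G1 G2 : S1 → S2 → ℝ)
    (graphBR : Set (((S1 → ℝ) × (S2 → ℝ)) × ((S1 → ℝ) × (S2 → ℝ))))
    (hgraph : graphBR = {p | p.1 ∈ simplexProd S1 S2 ∧ p.2 ∈ simplexProd S1 S2 ∧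
      IsReply1 G1 0 p.2.1 p.1.2 ∧ IsReply2 G2 0 p.2.2 p.1.1})
    (W : ℝ → Set (((S1 → ℝ) × (S2 → ℝ)) × ((S1 → ℝ) × (S2 → ℝ))))
    (hW : ∀ μ : ℝ, W μ = {p | p.1 ∈ simplexProd S1 S2 ∧ p.2 ∈ simplexProd S1 S2 ∧
      IsReply1 G1 μ p.2.1 p.1.2 ∧ IsReply2 G2 μ p.2.2 p.1.1}) :
    (∀ μ > (0 : ℝ), ∃ U : Set (((S1 → ℝ) × (S2 → ℝ)) × ((S1 → ℝ) × (S2 → ℝ))),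
      IsOpen U ∧
      graphBR ⊆ U ∩ (simplexProd S1 S2 ×ˢ simplexProd S1 S2) ∧
      U ∩ (simplexProd S1 S2 ×ˢ simplexProd S1 S2) ⊆ W μ) ∧
    (∀ V : Set (((S1 → ℝ) × (S2 → ℝ)) × ((S1 → ℝ) × (S2 → ℝ))),
      IsOpen V → graphBR ⊆ V ∩ (simplexProd S1 S2 ×ˢ simplexProd S1 S2) →
      ∃ μ > (0 : ℝ), W μ ⊆ V ∩ (simplexProd S1 S2 ×ˢ simplexProd S1 S2)) := by
  set K : Set (((S1 → ℝ) × (S2 → ℝ)) × ((S1 → ℝ) × (S2 → ℝ))) :=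
    simplexProd S1 S2 ×ˢ simplexProd S1 S2 with hK
  -- continuity helpers
  have hc1 : ∀ s1 : S1, Continuous
      (fun p : ((S1 → ℝ) × (S2 → ℝ)) × ((S1 → ℝ) × (S2 → ℝ)) =>
        mixedPayoff G1 (dirac s1) p.1.2) := fun s1 =>
    (cont_mixedPayoff G1).comp
      ((continuous_const (y := dirac s1)).prodMk (continuous_snd.comp continuous_fst))
  have hc1' : Continuous
      (fun p : ((S1 → ℝ) × (S2 → ℝ)) × ((S1 → ℝ) × (S2 → ℝ)) =>
        mixedPayoff G1 p.2.1 p.1.2) :=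
    (cont_mixedPayoff G1).comp
      ((continuous_fst.comp continuous_snd).prodMk (continuous_snd.comp continuous_fst))
  have hc2 : ∀ s2 : S2, Continuous
      (fun p : ((S1 → ℝ) × (S2 → ℝ)) × ((S1 → ℝ) × (S2 → ℝ)) =>
        mixedPayoff G2 p.1.1 (dirac s2)) := fun s2 =>
    (cont_mixedPayoff G2).comp
      ((continuous_fst.comp continuous_fst).prodMk (continuous_const (y := dirac s2)))
  have hc2' : Continuous
      (fun p : ((S1 → ℝ) × (S2 → ℝ)) × ((S1 → ℝ) × (S2 → ℝ)) =>
        mixedPayoff G2 p.1.1 p.2.2) :=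
    (cont_mixedPayoff G2).comp
      ((continuous_fst.comp continuous_fst).prodMk (continuous_snd.comp continuous_snd))
  constructor
  · -- Part (i)
    intro μ hμ
    refine ⟨{p | (∀ s1 : S1, mixedPayoff G1 (dirac s1) p.1.2 - μ < mixedPayoff G1 p.2.1 p.1.2) ∧
        (∀ s2 : S2, mixedPayoff G2 p.1.1 (dirac s2) - μ < mixedPayoff G2 p.1.1 p.2.2)}, ?_, ?_, ?_⟩
    · have : IsOpen (⋂ s1 : S1, {p : ((S1 → ℝ) × (S2 → ℝ)) × ((S1 → ℝ) × (S2 → ℝ)) |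
          mixedPayoff G1 (dirac s1) p.1.2 - μ < mixedPayoff G1 p.2.1 p.1.2}) :=
        isOpen_iInter_of_finite fun s1 => isOpen_lt ((hc1 s1).sub continuous_const) hc1'
      have h2 : IsOpen (⋂ s2 : S2, {p : ((S1 → ℝ) × (S2 → ℝ)) × ((S1 → ℝ) × (S2 → ℝ)) |
          mixedPayoff G2 p.1.1 (dirac s2) - μ < mixedPayoff G2 p.1.1 p.2.2}) :=
        isOpen_iInter_of_finite fun s2 => isOpen_lt ((hc2 s2).sub continuous_const) hc2'
      convert this.inter h2 using 1
      ext p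
      simp [Set.mem_iInter]
    · intro p hp
      rw [hgraph] at hp
      obtain ⟨h1, h2, h3, h4⟩ := hp
      refine ⟨⟨fun s1 => ?_, fun s2 => ?_⟩, h1, h2⟩
      · have := h3 s1; simp only [sub_zero] at this; linarith
      · have := h4 s2; simp only [sub_zero] at this; linarith
    · rintro p ⟨⟨h3, h4⟩, h1, h2⟩
      rw [hW]
      exact ⟨h1, h2, fun s1 => (h3 s1).le, fun s2 => (h4 s2).le⟩
  · -- Part (ii)
    intro V hV hsub
    by_contra hcon
    push_neg at hcon
    -- W μ ⊆ K always
    have hWK : ∀ μ : ℝ, W μ ⊆ K := by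
      intro μ p hp
      rw [hW] at hp
      exact ⟨hp.1, hp.2.1⟩
    have hKcomp : IsCompact K :=
      ((isCompact_stdSimplex ℝ S1).prod (isCompact_stdSimplex ℝ S2)).prod
        ((isCompact_stdSimplex ℝ S1).prod (isCompact_stdSimplex ℝ S2))
    have hWclosed : ∀ μ : ℝ, IsClosed (W μ) := by
      intro μ
      rw [hW]
      have : {p : ((S1 → ℝ) × (S2 → ℝ)) × ((S1 → ℝ) × (S2 → ℝ)) |
          p.1 ∈ simplexProd S1 S2 ∧ p.2 ∈ simplexProd S1 S2 ∧
          IsReply1 G1 μ p.2.1 p.1.2 ∧ IsReply2 G2 μ p.2.2 p.1.1} =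
          K ∩ ((⋂ s1 : S1, {p | mixedPayoff G1 (dirac s1) p.1.2 - μ ≤ mixedPayoff G1 p.2.1 p.1.2}) ∩
          (⋂ s2 : S2, {p | mixedPayoff G2 p.1.1 (dirac s2) - μ ≤ mixedPayoff G2 p.1.1 p.2.2})) := by
        ext p
        simp only [Set.mem_setOf_eq, Set.mem_inter_iff, Set.mem_iInter, hK, Set.mem_prod]
        tauto
      rw [this]
      refine IsClosed.inter ?_ (IsClosed.inter ?_ ?_)
      · exact (((isClosed_stdSimplex ℝ S1).prod (isClosed_stdSimplex ℝ S2)).prod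
          ((isClosed_stdSimplex ℝ S1).prod (isClosed_stdSimplex ℝ S2)))
      · exact isClosed_iInter fun s1 => isClosed_le ((hc1 s1).sub continuous_const) hc1'
      · exact isClosed_iInter fun s2 => isClosed_le ((hc2 s2).sub continuous_const) hc2'
    -- the family F μ = W μ \ V
    set F : {μ : ℝ // 0 < μ} → Set (((S1 → ℝ) × (S2 → ℝ)) × ((S1 → ℝ) × (S2 → ℝ))) :=
      fun μ => W μ.1 \ V with hF
    have hFclosed : ∀ μ, IsClosed (F μ) := fun μ =>
      (hWclosed μ.1).sdiff hV
    have hFcomp : ∀ μ, IsCompact (F μ) := fun μ =>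
      hKcomp.of_isClosed_subset (hFclosed μ) fun p hp => hWK μ.1 hp.1
    have hFne : ∀ μ, (F μ).Nonempty := by
      rintro ⟨μ, hμ⟩
      have hns := hcon μ hμ
      rw [Set.not_subset] at hns
      obtain ⟨p, hp, hp'⟩ := hns
      exact ⟨p, hp, fun hv => hp' ⟨hv, hWK μ hp⟩⟩
    have hWmono : ∀ μ ν : ℝ, μ ≤ ν → W μ ⊆ W ν := by
      intro μ ν h p hp
      rw [hW] at hp ⊢
      refine ⟨hp.1, hp.2.1, fun s1 => ?_, fun s2 => ?_⟩
      · have := hp.2.2.1 s1; linarith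
      · have := hp.2.2.2 s2; linarith
    have hdir : Directed (· ⊇ ·) F := by
      rintro ⟨μ, hμ⟩ ⟨ν, hν⟩
      refine ⟨⟨min μ ν, lt_min hμ hν⟩, ?_, ?_⟩
      · exact fun p hp => ⟨hWmono _ _ (min_le_left μ ν) hp.1, hp.2⟩
      · exact fun p hp => ⟨hWmono _ _ (min_le_right μ ν) hp.1, hp.2⟩
    have : Nonempty {μ : ℝ // 0 < μ} := ⟨⟨1, one_pos⟩⟩
    obtain ⟨p, hp⟩ := IsCompact.nonempty_iInter_of_directed_nonempty_isCompact_isClosed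
      F hdir hFne hFcomp hFclosed
    simp only [Set.mem_iInter] at hp
    have hp1 : p ∈ W 1 := (hp ⟨1, one_pos⟩).1
    rw [hW] at hp1
    have hpnV : p ∉ V := (hp ⟨1, one_pos⟩).2
    have hpg : p ∈ graphBR := by
      rw [hgraph]
      refine ⟨hp1.1, hp1.2.1, fun s1 => ?_, fun s2 => ?_⟩
      · rw [sub_zero]
        refine le_of_forall_pos_le_add fun ε hε => ?_
        have := (hp ⟨ε, hε⟩).1
        rw [hW] at this
        have := this.2.2.1 s1
        linarith
      · rw [sub_zero]
        refine le_of_forall_pos_le_add fun ε hε => ?_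
        have := (hp ⟨ε, hε⟩).1
        rw [hW] at this
        have := this.2.2.2 s2
        linarith
    exact hpnV (hsub hpg).1
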